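/- Let 𝒞 be the fair-scheduler n-round abstract interactive channel with n ≥ 2, and let 𝕍 be a vulnerability measure satisfying the healthiness conditions. Let K be uniform on {0,1}, let Bob's strategy s_B always request the resource (h_i(t)=1 for all i,t), let Alice's strategy be s_0 (never request: g_i(t)=0) when K=0 and s_1 (always request: g_i(t)=1) when K=1. Then Bob's observed trace determines K with certainty: under K=0 Bob receives 1 at every round, while under K=1 Bob receives 0 at least once. Consequently the 𝕍-leakage of this attack is 𝕍(Ber(1)) − 𝕍(Ber(1/2)) > 0, and hence the fair scheduler has strictly positive classical 𝕍-capacity. -/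

import Mathlib

open scoped Classical

noncomputable section

/-- A probability vector (probability distribution) on a finite type. -/
def IsProbVector {α : Type} [Fintype α] (p : α → ℝ) : Prop :=
  (∀ a, 0 ≤ p a) ∧ ∑ a, p a = 1

/-- A vulnerability measure: a real-valued function on probability
distributions on finite types. -/
structure VulnMeasure : Type 1 where
  V : ∀ (α : Type) [Fintype α], (α → ℝ) → ℝ

/-- The Bernoulli distribution with parameter `ρ`, as a distribution on `Bool`. -/
def Ber (ρ : ℝ) : Bool → ℝ := fun b => if b then ρ else 1 - ρ

namespace VulnMeasure

variable (𝕍 : VulnMeasure)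

/-- `I_𝕍(X;Y)`: the expected increase in 𝕍-vulnerability of the posterior over
the prior, for a joint distribution `p` of `(X, Y)` on `α × β`. -/
def IV {α β : Type} [Fintype α] [Fintype β] (p : α × β → ℝ) : ℝ :=
  (∑ b : β, (∑ a : α, p (a, b)) * 𝕍.V α (fun a => p (a, b) / ∑ a' : α, p (a', b)))
    - 𝕍.V α (fun a => ∑ b : β, p (a, b))

/-- Healthiness condition (1): the composition inequality for Markov chains
`X → Y → Z` (specified by a prior `pX` and conditional kernels `q`, `r`). -/
def CompositionInequality : Prop :=
  ∀ (α β γ : Type) [Fintype α] [Fintype β] [Fintype γ]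
    (pX : α → ℝ) (q : α → β → ℝ) (r : β → γ → ℝ),
    IsProbVector pX → (∀ a, IsProbVector (q a)) → (∀ b, IsProbVector (r b)) →
    𝕍.IV (fun ac : α × γ => ∑ b : β, pX ac.1 * q ac.1 b * r b ac.2) ≤
        sSup {v | ∃ pX' : α → ℝ, IsProbVector pX' ∧
          v = 𝕍.IV fun ab : α × β => pX' ab.1 * q ab.1 ab.2} ∧
    𝕍.IV (fun ac : α × γ => ∑ b : β, pX ac.1 * q ac.1 b * r b ac.2) ≤
        sSup {v | ∃ pY' : β → ℝ, IsProbVector pY' ∧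
          v = 𝕍.IV fun bc : β × γ => pY' bc.1 * r bc.1 bc.2}

/-- Healthiness condition (2): Bernoulli distributions closer to uniform are
strictly less vulnerable. -/
def BerStrictMono : Prop :=
  ∀ ρ ρ' : ℝ, 0 ≤ ρ → ρ ≤ 1 → 0 ≤ ρ' → ρ' ≤ 1 →
    |ρ - 1 / 2| < |ρ' - 1 / 2| → 𝕍.V Bool (Ber ρ) < 𝕍.V Bool (Ber ρ')

/-- Healthiness condition (3): a binary symmetric channel with error
probability `p` leaks at most `𝕍(Ber(1-p)) - 𝕍(Ber(1/2))`. -/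
def BSCBound : Prop :=
  ∀ p : ℝ, 0 ≤ p → p ≤ 1 → ∀ pX : Bool → ℝ, IsProbVector pX →
    𝕍.IV (fun xy : Bool × Bool => pX xy.1 * (if xy.2 = xy.1 then 1 - p else p)) ≤
      𝕍.V Bool (Ber (1 - p)) - 𝕍.V Bool (Ber (1 / 2))

/-- The three healthiness conditions for a vulnerability measure. -/
def Healthy : Prop := 𝕍.CompositionInequality ∧ 𝕍.BerStrictMono ∧ 𝕍.BSCBound

end VulnMeasure

/-- Alice's view of a single round of a trace. -/
def viewA {A B X Y : Type} (e : A × B × X × Y) : A × X := (e.1, e.2.2.1)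

/-- Bob's view of a single round of a trace. -/
def viewB {A B X Y : Type} (e : A × B × X × Y) : B × Y := (e.2.1, e.2.2.2)

/-- An `n`-round abstract interactive channel (`n`-IC): at each round `i`,
given the history so far and the pair of messages sent by Alice and Bob, it
returns a probability distribution on the pair of messages sent back. -/
structure IC (n : ℕ) (A B X Y : Type) [Fintype X] [Fintype Y] where
  f : ∀ i : Fin n, (Fin i.val → A × B × X × Y) → A × B → X × Y → ℝ
  f_prob : ∀ i h ab, IsProbVector (f i h ab)

/-- The `i`-th prefix of a trace. -/
def prefixOf {n : ℕ} {α : Type} (t : Fin n → α) (i : Fin n) : Fin i.val → α :=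
  fun j => t ⟨j.val, lt_trans j.isLt i.isLt⟩

/-- Alice's view of the `i`-th prefix of a trace. -/
def aView {n : ℕ} {A B X Y : Type} (t : Fin n → A × B × X × Y) (i : Fin n) :
    Fin i.val → A × X := fun j => viewA (prefixOf t i j)

/-- Bob's view of the `i`-th prefix of a trace. -/
def bView {n : ℕ} {A B X Y : Type} (t : Fin n → A × B × X × Y) (i : Fin n) :
    Fin i.val → B × Y := fun j => viewB (prefixOf t i j)

/-- Bob's view of a whole trace. -/
def bobView {n : ℕ} {A B X Y : Type} (t : Fin n → A × B × X × Y) : Fin n → B × Y :=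
  fun i => viewB (t i)

/-- A classical (probabilistic) strategy for Alice. -/
structure AStrat (n : ℕ) (A X : Type) [Fintype A] where
  g : ∀ i : Fin n, (Fin i.val → A × X) → A → ℝ
  g_prob : ∀ i h, IsProbVector (g i h)

/-- A classical (probabilistic) strategy for Bob. -/
structure BStrat (n : ℕ) (B Y : Type) [Fintype B] where
  g : ∀ i : Fin n, (Fin i.val → B × Y) → B → ℝ
  g_prob : ∀ i h, IsProbVector (g i h)

variable {n : ℕ} {A B X Y : Type} [Fintype A] [Fintype B] [Fintype X] [Fintype Y]

/-- The probability contributed by the channel at round `i` of trace `t`. -/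
def chanStep (C : IC n A B X Y) (t : Fin n → A × B × X × Y) (i : Fin n) : ℝ :=
  C.f i (prefixOf t i) ((t i).1, (t i).2.1) ((t i).2.2.1, (t i).2.2.2)

/-- The probability of a trace under classical strategies for Alice and Bob. -/
def traceProb (C : IC n A B X Y) (sA : AStrat n A X) (sB : BStrat n B Y)
    (t : Fin n → A × B × X × Y) : ℝ :=
  ∏ i : Fin n, sA.g i (aView t i) (t i).1 * sB.g i (bView t i) (t i).2.1 * chanStep C t i

/-- The joint distribution of the secret and Bob's view of the trace, given a
prior `pK` on secrets and trace distributions `P k`. -/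
def bobJoint {K : Type} [Fintype K] (pK : K → ℝ)
    (P : K → (Fin n → A × B × X × Y) → ℝ) : K × (Fin n → B × Y) → ℝ :=
  fun kv => pK kv.1 * ∑ t : Fin n → A × B × X × Y, if bobView t = kv.2 then P kv.1 t else 0

/-- The 𝕍-leakage to Bob : the expected posterior 𝕍-vulnerability of the
secret given Bob's view, minus the prior vulnerability. -/
def leakage (𝕍 : VulnMeasure) {K : Type} [Fintype K] (pK : K → ℝ)
    (P : K → (Fin n → A × B × X × Y) → ℝ) : ℝ :=
  𝕍.IV (bobJoint pK P)

/-- A secret: a finite set together with a prior probability distribution. -/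
structure Secret : Type 1 where
  K : Type
  [fin : Fintype K]
  p : K → ℝ
  prob : IsProbVector p

attribute [instance] Secret.fin

/-- The classical 𝕍-capacity of a channel: the supremum of 𝕍-leakage over all
secrets and all classical strategies. -/
def classicalCapacity (𝕍 : VulnMeasure) (C : IC n A B X Y) : ℝ :=
  sSup {r | ∃ (s : Secret) (φA : s.K → AStrat n A X) (sB : BStrat n B Y),
    r = leakage 𝕍 s.p fun k => traceProb C (φA k) sB}

/-- An orthogonal projective measurement with outcomes in `O` on `ℂ^d`. -/
structure ProjMeas (d : ℕ) (O : Type) [Fintype O] where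
  P : O → Matrix (Fin d) (Fin d) ℂ
  herm : ∀ o, (P o).IsHermitian
  idem : ∀ o, P o * P o = P o
  orth : ∀ o o', o ≠ o' → P o * P o' = 0
  complete : ∑ o, P o = 1

/-- A quantum joint strategy: a shared entangled state on `ℂ^{dA} ⊗ ℂ^{dB}`,
projective measurements for Alice (depending on the secret and her view) and
for Bob (depending on his view). -/
structure QStrat (n : ℕ) (K A B X Y : Type) [Fintype A] [Fintype B] where
  dA : ℕ
  dB : ℕ
  ψ : Fin dA × Fin dB → ℂ
  unit : ∑ q, Complex.normSq (ψ q) = 1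
  Am : ∀ (k : K) (i : Fin n), (Fin i.val → A × X) → ProjMeas dA A
  Bm : ∀ (i : Fin n), (Fin i.val → B × Y) → ProjMeas dB B

/-- The ordered product `A^k_h` of Alice's projections along a history `h` of
length `m` (later rounds act on the left). -/
def aliceHistProd {K : Type} (S : QStrat n K A B X Y) (k : K) {m : ℕ} (hm : m ≤ n)
    (h : Fin m → A × B × X × Y) : Matrix (Fin S.dA) (Fin S.dA) ℂ :=
  (((List.finRange m).map fun i =>
      (S.Am k ⟨i.val, lt_of_lt_of_le i.isLt hm⟩
          (fun j => viewA (h ⟨j.val, lt_trans j.isLt i.isLt⟩))).P (h i).1).reverse).prod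

/-- The ordered product `B_h` of Bob's projections along a history `h`. -/
def bobHistProd {K : Type} (S : QStrat n K A B X Y) {m : ℕ} (hm : m ≤ n)
    (h : Fin m → A × B × X × Y) : Matrix (Fin S.dB) (Fin S.dB) ℂ :=
  (((List.finRange m).map fun i =>
      (S.Bm ⟨i.val, lt_of_lt_of_le i.isLt hm⟩
          (fun j => viewB (h ⟨j.val, lt_trans j.isLt i.isLt⟩))).P (h i).2.1).reverse).prod

/-- `⟨ψ|A^k_t ⊗ B_t|ψ⟩` for a full trace `t`. -/
def qPath {K : Type} (S : QStrat n K A B X Y) (k : K) (t : Fin n → A × B × X × Y) : ℝ :=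
  (dotProduct (star S.ψ)
    ((Matrix.kroneckerMap (· * ·) (aliceHistProd S k le_rfl t)
        (bobHistProd S le_rfl t)).mulVec S.ψ)).re

/-- The probability of a trace under a quantum joint strategy. -/
def qTraceProb (C : IC n A B X Y) {K : Type} (S : QStrat n K A B X Y) (k : K)
    (t : Fin n → A × B × X × Y) : ℝ :=
  qPath S k t * ∏ i : Fin n, chanStep C t i

/-- The entangled 𝕍-capacity of a channel: the supremum of 𝕍-leakage over all
secrets and all quantum joint strategies. -/
def entCapacity (𝕍 : VulnMeasure) (C : IC n A B X Y) : ℝ :=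
  sSup {r | ∃ (s : Secret) (S : QStrat n s.K A B X Y),
    r = leakage 𝕍 s.p fun k => qTraceProb C S k}

/-- A generalised strategy: a joint (correlated) probabilistic strategy for
Alice and Bob, possibly depending on the secret. -/
structure GenStrat (n : ℕ) (K A B X Y : Type) [Fintype A] [Fintype B] where
  g : ∀ (k : K) (i : Fin n), (Fin i.val → A × B × X × Y) → A × B → ℝ
  g_prob : ∀ k i h, IsProbVector (g k i h)

/-- The non-signalling conditions for a generalised strategy. -/
def GenStrat.NonSignalling {K : Type} (S : GenStrat n K A B X Y) : Prop :=
  (∀ (k k' : K) (i : Fin n) (h h' : Fin i.val → A × B × X × Y),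
      (fun j => viewB (h j)) = (fun j => viewB (h' j)) →
      ∀ b : B, ∑ a : A, S.g k i h (a, b) = ∑ a : A, S.g k' i h' (a, b)) ∧
  (∀ (k : K) (i : Fin n) (h h' : Fin i.val → A × B × X × Y),
      (fun j => viewA (h j)) = (fun j => viewA (h' j)) →
      ∀ a : A, ∑ b : B, S.g k i h (a, b) = ∑ b : B, S.g k i h' (a, b))

/-- The probability of a trace under a generalised strategy. -/
def genTraceProb (C : IC n A B X Y) {K : Type} (S : GenStrat n K A B X Y) (k : K)
    (t : Fin n → A × B × X × Y) : ℝ :=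
  ∏ i : Fin n, S.g k i (prefixOf t i) ((t i).1, (t i).2.1) * chanStep C t i

/-- The non-signalling 𝕍-capacity of a channel: the supremum of 𝕍-leakage over
all secrets and all non-signalling generalised strategies. -/
def nsCapacity (𝕍 : VulnMeasure) (C : IC n A B X Y) : ℝ :=
  sSup {r | ∃ (s : Secret) (S : GenStrat n s.K A B X Y), S.NonSignalling ∧
    r = leakage 𝕍 s.p fun k => genTraceProb C S k}


/-- The point distribution at `a`. -/
def pt {α : Type} [Fintype α] (a : α) : α → ℝ := fun x => if x = a then 1 else 0

lemma isProbVector_pt {α : Type} [Fintype α] (a : α) : IsProbVector (pt a) := by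
  constructor
  · intro x; unfold pt; split_ifs <;> norm_num
  · unfold pt; simp

lemma isProbVector_fairCoin :
    IsProbVector (fun xy : Bool × Bool =>
      if xy = (true, false) then (1 : ℝ) / 2 else if xy = (false, true) then 1 / 2 else 0) := by
  constructor
  · intro xy; dsimp only; split_ifs <;> norm_num
  · rw [Fintype.sum_prod_type]
    simp only [Fintype.sum_bool]
    norm_num

/-- The fair resource scheduler: if only one of Alice and Bob requests the
resource they get it; if both request it, it goes to whoever has received it
fewer times so far (with a fair coin flip to break ties). -/
def fairSched (n : ℕ) : IC n Bool Bool Bool Bool where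
  f := fun _ h ab xy =>
    if ab = (true, false) then pt ((true, false) : Bool × Bool) xy
    else if ab = (false, true) then pt ((false, true) : Bool × Bool) xy
    else if ab = (false, false) then pt ((false, false) : Bool × Bool) xy
    else
      if (Finset.univ.filter fun j => (h j).2.2.1 = true).card <
          (Finset.univ.filter fun j => (h j).2.2.2 = true).card then
        pt ((true, false) : Bool × Bool) xy
      else if (Finset.univ.filter fun j => (h j).2.2.2 = true).card <
          (Finset.univ.filter fun j => (h j).2.2.1 = true).card then
        pt ((false, true) : Bool × Bool) xy
      else if xy = (true, false) then (1 : ℝ) / 2 else if xy = (false, true) then 1 / 2 else 0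
  f_prob := by
    intro i h ab
    try dsimp only
    split_ifs <;> first
      | exact isProbVector_pt _
      | exact isProbVector_fairCoin

/-- The constant strategy for Alice that always sends `v`. -/
def alwaysA (n : ℕ) (v : Bool) : AStrat n Bool Bool where
  g := fun _ _ => pt v
  g_prob := fun _ _ => isProbVector_pt v

/-- The constant strategy for Bob that always sends `v`. -/
def alwaysB (n : ℕ) (v : Bool) : BStrat n Bool Bool where
  g := fun _ _ => pt v
  g_prob := fun _ _ => isProbVector_pt v


/- ===== auxiliary lemmas ===== -/

lemma prefixOf_snoc_castSucc {m : ℕ} {α : Type} (s : Fin m → α) (a : α) (i : Fin m) :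
    prefixOf (Fin.snoc s a : Fin (m+1) → α) i.castSucc = prefixOf s i := by
  funext j
  rw [show prefixOf (Fin.snoc s a : Fin (m+1) → α) i.castSucc j =
      (Fin.snoc s a : Fin (m+1) → α) (Fin.castSucc ⟨j.val, lt_trans j.isLt i.isLt⟩) from rfl,
    Fin.snoc_castSucc]
  rfl

lemma prefixOf_snoc_last {m : ℕ} {α : Type} (s : Fin m → α) (a : α) :
    prefixOf (Fin.snoc s a : Fin (m+1) → α) (Fin.last m) = fun j : Fin m => s j := by
  funext j
  rw [show prefixOf (Fin.snoc s a : Fin (m+1) → α) (Fin.last m) j =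
      (Fin.snoc s a : Fin (m+1) → α) (Fin.castSucc j) from rfl, Fin.snoc_castSucc]

lemma sum_kernel_prod {α : Type} [Fintype α] :
    ∀ (m : ℕ) (p : ∀ i : Fin m, (Fin i.val → α) → α → ℝ),
    (∀ i h, IsProbVector (p i h)) →
    ∑ t : Fin m → α, ∏ i, p i (prefixOf t i) (t i) = 1 := by
  intro m
  induction m with
  | zero =>
    intro p hp
    simp
  | succ m ih =>
    intro p hp
    rw [← Equiv.sum_comp (Fin.snocEquiv (fun _ => α))]
    rw [Fintype.sum_prod_type]
    have key : ∀ (a : α) (s : Fin m → α),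
        (∏ i, p i (prefixOf (Fin.snocEquiv (fun _ => α) (a, s)) i)
          ((Fin.snocEquiv (fun _ => α) (a, s)) i)) =
        (∏ i : Fin m, p i.castSucc (prefixOf s i) (s i)) *
          p (Fin.last m) (fun j : Fin m => s j) a := by
      intro a s
      have hsnoc : (Fin.snocEquiv (fun _ => α) (a, s)) = Fin.snoc s a := rfl
      rw [hsnoc, Fin.prod_univ_castSucc]
      congr 1
      · apply Finset.prod_congr rfl
        intro i _
        rw [prefixOf_snoc_castSucc, Fin.snoc_castSucc]
      · rw [prefixOf_snoc_last, Fin.snoc_last]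
    rw [Finset.sum_comm]
    have inner : ∀ s : Fin m → α,
        ∑ a : α, ∏ i, p i (prefixOf (Fin.snocEquiv (fun _ => α) (a, s)) i)
          ((Fin.snocEquiv (fun _ => α) (a, s)) i) =
        ∏ i : Fin m, p i.castSucc (prefixOf s i) (s i) := by
      intro s
      simp only [key]
      rw [← Finset.mul_sum, (hp _ _).2, mul_one]
    rw [Finset.sum_congr rfl (fun s _ => inner s)]
    exact ih (fun i h => p i.castSucc h) (fun i h => hp i.castSucc h)

/-- The per-round kernel of a classical attack. -/
def stepKernel (C : IC n A B X Y) (sA : AStrat n A X) (sB : BStrat n B Y)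
    (i : Fin n) (h : Fin i.val → A × B × X × Y) : A × B × X × Y → ℝ :=
  fun e => sA.g i (fun j => viewA (h j)) e.1 * sB.g i (fun j => viewB (h j)) e.2.1 *
    C.f i h (e.1, e.2.1) (e.2.2.1, e.2.2.2)

lemma traceProb_eq_stepKernel (C : IC n A B X Y) (sA : AStrat n A X) (sB : BStrat n B Y)
    (t : Fin n → A × B × X × Y) :
    traceProb C sA sB t = ∏ i, stepKernel C sA sB i (prefixOf t i) (t i) := rfl

lemma stepKernel_prob (C : IC n A B X Y) (sA : AStrat n A X) (sB : BStrat n B Y)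
    (i : Fin n) (h : Fin i.val → A × B × X × Y) :
    IsProbVector (stepKernel C sA sB i h) := by
  constructor
  · intro e
    exact mul_nonneg (mul_nonneg ((sA.g_prob _ _).1 _) ((sB.g_prob _ _).1 _))
      ((C.f_prob _ _ _).1 _)
  · unfold stepKernel
    rw [Fintype.sum_prod_type]
    simp only [Fintype.sum_prod_type]
    have : ∀ a : A, ∑ b : B, ∑ x : X, ∑ y : Y,
        sA.g i (fun j => viewA (h j)) a * sB.g i (fun j => viewB (h j)) b *
          C.f i h (a, b) (x, y)
        = sA.g i (fun j => viewA (h j)) a := by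
      intro a
      have : ∀ b : B, ∑ x : X, ∑ y : Y,
          sA.g i (fun j => viewA (h j)) a * sB.g i (fun j => viewB (h j)) b *
            C.f i h (a, b) (x, y)
          = sA.g i (fun j => viewA (h j)) a * sB.g i (fun j => viewB (h j)) b := by
        intro b
        simp only [← Finset.mul_sum]
        have h1 : ∑ x : X, ∑ y : Y, C.f i h (a, b) (x, y) = 1 := by
          rw [← Fintype.sum_prod_type]; exact (C.f_prob i h (a, b)).2
        rw [h1, mul_one]
      rw [Finset.sum_congr rfl (fun b _ => this b), ← Finset.mul_sum,
        (sB.g_prob _ _).2, mul_one]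
    rw [Finset.sum_congr rfl (fun a _ => this a), (sA.g_prob _ _).2]

lemma traceProb_nonneg (C : IC n A B X Y) (sA : AStrat n A X) (sB : BStrat n B Y)
    (t : Fin n → A × B × X × Y) : 0 ≤ traceProb C sA sB t := by
  rw [traceProb_eq_stepKernel]
  exact Finset.prod_nonneg fun i _ => (stepKernel_prob C sA sB i _).1 _

lemma sum_traceProb (C : IC n A B X Y) (sA : AStrat n A X) (sB : BStrat n B Y) :
    ∑ t : Fin n → A × B × X × Y, traceProb C sA sB t = 1 := by
  simp only [traceProb_eq_stepKernel]
  exact sum_kernel_prod n (stepKernel C sA sB) (stepKernel_prob C sA sB)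

/-- Bob's view distribution induced by trace distributions. -/
def qView {K : Type} (P : K → (Fin n → A × B × X × Y) → ℝ) (k : K)
    (v : Fin n → B × Y) : ℝ :=
  ∑ t, if bobView t = v then P k t else 0

lemma qView_nonneg {K : Type} (P : K → (Fin n → A × B × X × Y) → ℝ)
    (hP : ∀ k t, 0 ≤ P k t) (k : K) (v : Fin n → B × Y) : 0 ≤ qView P k v := by
  apply Finset.sum_nonneg
  intro t _
  split_ifs
  · exact hP k t
  · exact le_rfl

lemma qView_sum {K : Type} (P : K → (Fin n → A × B × X × Y) → ℝ) (k : K) :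
    ∑ v : Fin n → B × Y, qView P k v = ∑ t : Fin n → A × B × X × Y, P k t := by
  unfold qView
  rw [Finset.sum_comm]
  apply Finset.sum_congr rfl
  intro t _
  rw [Finset.sum_ite_eq]
  simp

/-- The all-`(0,1,0,1)` trace. -/
def t0 (n : ℕ) : Fin n → Bool × Bool × Bool × Bool := fun _ => (false, true, false, true)

lemma traceProb_never (n : ℕ) (t : Fin n → Bool × Bool × Bool × Bool) :
    traceProb (fairSched n) (alwaysA n false) (alwaysB n true) t =
      if t = t0 n then 1 else 0 := by
  split_ifs with h
  · subst h
    rw [traceProb_eq_stepKernel]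
    apply Finset.prod_eq_one
    intro i _
    simp [stepKernel, alwaysA, alwaysB, pt, fairSched, t0]
  · obtain ⟨i, hi⟩ : ∃ i, t i ≠ (false, true, false, true) := by
      by_contra hc
      push_neg at hc
      exact h (funext hc)
    rw [traceProb_eq_stepKernel]
    apply Finset.prod_eq_zero (Finset.mem_univ i)
    rcases hti : t i with ⟨a, b, x, y⟩
    rw [hti] at hi
    unfold stepKernel alwaysA alwaysB pt
    dsimp only
    cases a with
    | true => simp
    | false =>
      cases b with
      | false => simp
      | true =>
        cases x <;> cases y <;> simp_all [fairSched, pt]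

lemma exists_false_round (n : ℕ) (hn : 2 ≤ n) (t : Fin n → Bool × Bool × Bool × Bool)
    (ht : 0 < traceProb (fairSched n) (alwaysA n true) (alwaysB n true) t) :
    ∃ i, (t i).2.2.2 = false := by
  rw [traceProb_eq_stepKernel] at ht
  have hne : ∀ i : Fin n,
      stepKernel (fairSched n) (alwaysA n true) (alwaysB n true) i (prefixOf t i) (t i) ≠ 0 := by
    intro i h0
    rw [Finset.prod_eq_zero (Finset.mem_univ i) h0] at ht
    exact lt_irrefl 0 ht
  have ha : ∀ i, (t i).1 = true := by
    intro i
    by_contra hx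
    exact hne i (by unfold stepKernel alwaysA alwaysB pt; simp [hx])
  have hb : ∀ i, (t i).2.1 = true := by
    intro i
    by_contra hx
    exact hne i (by unfold stepKernel alwaysA alwaysB pt; simp [hx])
  have hf : ∀ i, (fairSched n).f i (prefixOf t i) ((t i).1, (t i).2.1)
      ((t i).2.2.1, (t i).2.2.2) ≠ 0 := by
    intro i h0
    exact hne i (by unfold stepKernel; rw [h0, mul_zero])
  by_contra hc
  push_neg at hc
  have hy : ∀ i, (t i).2.2.2 = true := by
    intro i
    have := hc i
    simpa using this
  set i0 : Fin n := ⟨0, by omega⟩ with hi0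
  set i1 : Fin n := ⟨1, by omega⟩ with hi1
  have hv0 : (i0 : Fin n).val = 0 := rfl
  have hv1 : (i1 : Fin n).val = 1 := rfl
  have hcard0 : ∀ s : Finset (Fin (i0.val)), s.card = 0 := by
    intro s
    have h1 := Finset.card_le_univ s
    rw [Fintype.card_fin] at h1
    omega
  have hx0 : (t i0).2.2.1 = false := by
    by_contra hx
    rw [Bool.not_eq_false] at hx
    apply hf i0
    rw [ha i0, hb i0, hy i0, hx]
    unfold fairSched pt
    simp [hcard0]
  have hpre : ∀ j : Fin (i1.val), prefixOf t i1 j = t i0 := by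
    intro j
    show t _ = t i0
    congr 1
    apply Fin.ext
    have hj : j.val < 1 := j.isLt
    show j.val = i0.val
    omega
  have hcX : (Finset.univ.filter fun j : Fin (i1.val) =>
      (prefixOf t i1 j).2.2.1 = true).card = 0 := by
    rw [Finset.card_eq_zero, Finset.filter_eq_empty_iff]
    intro j _
    rw [hpre j, hx0]
    simp
  have hcY : (Finset.univ.filter fun j : Fin (i1.val) =>
      (prefixOf t i1 j).2.2.2 = true).card = 1 := by
    rw [Finset.filter_true_of_mem (fun j _ => by rw [hpre j, hy i0]),
      Finset.card_univ, Fintype.card_fin, hv1]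
  apply hf i1
  rw [ha i1, hb i1, hy i1]
  unfold fairSched
  dsimp only
  rw [hcX, hcY]
  unfold pt
  simp

lemma funBool_eq_Ber {ρ : ℝ} (g : Bool → ℝ) (h1 : g true = ρ) (h0 : g false = 1 - ρ) :
    g = Ber ρ := by
  funext a
  cases a
  · simpa [Ber] using h0
  · simpa [Ber] using h1

lemma IV_bool (𝕍 : VulnMeasure) (p : Bool × Bool → ℝ) :
    𝕍.IV p =
      (p (true, true) + p (false, true)) *
          𝕍.V Bool (fun a => p (a, true) / (p (true, true) + p (false, true)))
        + (p (true, false) + p (false, false)) *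
          𝕍.V Bool (fun a => p (a, false) / (p (true, false) + p (false, false)))
        - 𝕍.V Bool (fun a => p (a, true) + p (a, false)) := by
  simp only [VulnMeasure.IV, Fintype.sum_bool]

lemma IV_BSC_uniform (𝕍 : VulnMeasure) (p : ℝ) :
    𝕍.IV (fun xy : Bool × Bool =>
        (fun _ : Bool => (1:ℝ)/2) xy.1 * (if xy.2 = xy.1 then 1 - p else p)) =
      (1/2) * 𝕍.V Bool (Ber (1 - p)) + (1/2) * 𝕍.V Bool (Ber p)
        - 𝕍.V Bool (Ber (1/2)) := by
  set q : Bool × Bool → ℝ :=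
    fun xy => (fun _ : Bool => (1:ℝ)/2) xy.1 * (if xy.2 = xy.1 then 1 - p else p) with hq
  rw [IV_bool]
  have hd : (1:ℝ)/2*(1-p)+1/2*p = 1/2 := by ring
  have hd' : (1:ℝ)/2*p+1/2*(1-p) = 1/2 := by ring
  have e1 : (fun a => q (a, true) / (q (true, true) + q (false, true))) = Ber (1 - p) := by
    apply funBool_eq_Ber
    · simp only [hq]
      norm_num
      rw [hd]
      field_simp
    · simp only [hq]
      norm_num
      rw [hd]
      field_simp
  have e2 : (fun a => q (a, false) / (q (true, false) + q (false, false))) = Ber p := by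
    apply funBool_eq_Ber
    · simp only [hq]
      norm_num
      rw [hd']
      field_simp
    · simp only [hq]
      norm_num
      rw [hd']
      field_simp
  have e3 : (fun a => q (a, true) + q (a, false)) = Ber (1/2) := by
    apply funBool_eq_Ber
    · simp only [hq]; norm_num; ring_nf
    · simp only [hq]; norm_num; ring_nf
  rw [e1, e2, e3]
  have w1 : q (true, true) + q (false, true) = 1/2 := by simp only [hq]; norm_num; ring
  have w2 : q (true, false) + q (false, false) = 1/2 := by simp only [hq]; norm_num; ring
  rw [w1, w2]

lemma V_Ber_zero_eq_one (𝕍 : VulnMeasure) (hB : 𝕍.BSCBound) :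
    𝕍.V Bool (Ber 0) = 𝕍.V Bool (Ber 1) := by
  have hpX : IsProbVector (fun _ : Bool => (1:ℝ)/2) :=
    ⟨fun a => by norm_num, by rw [Fintype.sum_bool]; norm_num⟩
  have h0 := hB 0 le_rfl zero_le_one (fun _ => 1/2) hpX
  have h1 := hB 1 zero_le_one le_rfl (fun _ => 1/2) hpX
  rw [IV_BSC_uniform 𝕍 0] at h0
  rw [IV_BSC_uniform 𝕍 1] at h1
  rw [show (1:ℝ) - 0 = 1 by norm_num] at h0
  rw [show (1:ℝ) - 1 = 0 by norm_num] at h1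
  exact le_antisymm (by linarith) (by linarith)

lemma leakage_two_point (𝕍 : VulnMeasure) (hB : 𝕍.BSCBound) {V : Type} [Fintype V]
    (q : Bool → V → ℝ) (v0 : V)
    (hqf1 : q false v0 = 1)
    (hqf0 : ∀ v, v ≠ v0 → q false v = 0)
    (hqt0 : q true v0 = 0)
    (hqsum : ∑ v, q true v = 1) :
    𝕍.IV (fun kv : Bool × V => (1:ℝ)/2 * q kv.1 kv.2)
      = 𝕍.V Bool (Ber 1) - 𝕍.V Bool (Ber (1/2)) := by
  show (∑ v, (∑ k : Bool, (1:ℝ)/2 * q k v) *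
        𝕍.V Bool (fun k => ((1:ℝ)/2 * q k v) / ∑ k' : Bool, (1:ℝ)/2 * q k' v))
      - 𝕍.V Bool (fun k => ∑ v, (1:ℝ)/2 * q k v)
      = 𝕍.V Bool (Ber 1) - 𝕍.V Bool (Ber (1/2))
  have hqfsum : ∑ v, q false v = 1 := by
    rw [Finset.sum_eq_single_of_mem v0 (Finset.mem_univ v0) (fun b _ hb => hqf0 b hb)]
    exact hqf1
  have hprior : (fun k : Bool => ∑ v, (1:ℝ)/2 * q k v) = Ber (1/2) := by
    apply funBool_eq_Ber
    · rw [← Finset.mul_sum, hqsum]; norm_num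
    · rw [← Finset.mul_sum, hqfsum]; norm_num
  have hmain : ∀ v, (∑ k : Bool, (1:ℝ)/2 * q k v) *
      𝕍.V Bool (fun k => ((1:ℝ)/2 * q k v) / ∑ k' : Bool, (1:ℝ)/2 * q k' v)
      = (∑ k : Bool, (1:ℝ)/2 * q k v) * 𝕍.V Bool (Ber 1) := by
    intro v
    by_cases hv : v0 = v
    · subst hv
      have hm : (∑ k : Bool, (1:ℝ)/2 * q k v0) = 1/2 := by
        rw [Fintype.sum_bool, hqt0, hqf1]
        norm_num
      rw [hm]
      congr 1
      have hpost : (fun k : Bool => ((1:ℝ)/2 * q k v0) / (1/2)) = Ber 0 := by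
        apply funBool_eq_Ber
        · rw [hqt0]; norm_num
        · rw [hqf1]; norm_num
      rw [hpost]
      exact V_Ber_zero_eq_one 𝕍 hB
    · have hf0 : q false v = 0 := hqf0 v (fun h => hv h.symm)
      have hm : (∑ k : Bool, (1:ℝ)/2 * q k v) = 1/2 * q true v := by
        rw [Fintype.sum_bool, hf0]; ring
      rw [hm]
      by_cases hz : q true v = 0
      · rw [hz]; norm_num
      · congr 1
        congr 1
        apply funBool_eq_Ber
        · rw [div_self (by simpa using hz)]
        · rw [hf0]; norm_num
  rw [Finset.sum_congr rfl (fun v _ => hmain v), hprior, ← Finset.sum_mul]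
  have htot : (∑ v, ∑ k : Bool, (1:ℝ)/2 * q k v) = 1 := by
    simp only [Fintype.sum_bool]
    rw [Finset.sum_add_distrib, ← Finset.mul_sum, ← Finset.mul_sum, hqsum, hqfsum]
    norm_num
  rw [htot, one_mul]

lemma leakage_le_M (𝕍 : VulnMeasure) (hcomp : 𝕍.CompositionInequality)
    {K V : Type} [Fintype K] [Fintype V]
    (pK : K → ℝ) (hp : IsProbVector pK) (q : K → V → ℝ) (hq : ∀ k, IsProbVector (q k)) :
    𝕍.IV (fun kv : K × V => pK kv.1 * q kv.1 kv.2) ≤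
      sSup {v | ∃ pY' : V → ℝ, IsProbVector pY' ∧
        v = 𝕍.IV fun bc : V × V => pY' bc.1 * (if bc.2 = bc.1 then 1 else 0)} := by
  obtain ⟨-, h2⟩ := hcomp K V V pK q (fun b c => if c = b then 1 else 0) hp hq
      (fun b => isProbVector_pt b)
  have harg : (fun ac : K × V => ∑ b, pK ac.1 * q ac.1 b * if ac.2 = b then 1 else 0)
      = fun kv : K × V => pK kv.1 * q kv.1 kv.2 := by
    funext ac
    simp only [mul_ite, mul_one, mul_zero]
    rw [Finset.sum_ite_eq]
    simp
  rw [harg] at h2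
  exact h2

set_option maxHeartbeats 2000000 in
/-- in the fair scheduler with `n ≥ 2` rounds, with Bob
always requesting the resource and Alice requesting always or never according
to a uniform secret bit: under `K = 0` (never request) every
positive-probability trace gives Bob the resource (`y_i = 1`) at every round,
while under `K = 1` (always request) every positive-probability trace denies
Bob the resource (`y_i = 0`) at least once; the 𝕍-leakage of this attack is
`𝕍(Ber(1)) − 𝕍(Ber(1/2)) > 0`; hence the fair scheduler has strictly positive
classical 𝕍-capacity. -/
theorem fair_scheduler_positive_capacity
    (n : ℕ) (hn : 2 ≤ n) (𝕍 : VulnMeasure) (h𝕍 : 𝕍.Healthy) :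
    (∀ t : Fin n → Bool × Bool × Bool × Bool,
        0 < traceProb (fairSched n) (alwaysA n false) (alwaysB n true) t →
        ∀ i, (t i).2.2.2 = true) ∧
    (∀ t : Fin n → Bool × Bool × Bool × Bool,
        0 < traceProb (fairSched n) (alwaysA n true) (alwaysB n true) t →
        ∃ i, (t i).2.2.2 = false) ∧
    leakage 𝕍 (fun _ : Bool => (1 : ℝ) / 2)
        (fun k => traceProb (fairSched n) (alwaysA n k) (alwaysB n true)) =
      𝕍.V Bool (Ber 1) - 𝕍.V Bool (Ber (1 / 2)) ∧
    0 < 𝕍.V Bool (Ber 1) - 𝕍.V Bool (Ber (1 / 2)) ∧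
    0 < classicalCapacity 𝕍 (fairSched n) := by
  obtain ⟨hcomp, hmono, hbsc⟩ := h𝕍
  -- conjunct 1
  have c1 : ∀ t : Fin n → Bool × Bool × Bool × Bool,
      0 < traceProb (fairSched n) (alwaysA n false) (alwaysB n true) t →
      ∀ i, (t i).2.2.2 = true := by
    intro t ht i
    rw [traceProb_never] at ht
    split_ifs at ht with h
    · rw [h]; rfl
    · exact absurd ht (lt_irrefl 0)
  -- conjunct 2
  have c2 : ∀ t : Fin n → Bool × Bool × Bool × Bool,
      0 < traceProb (fairSched n) (alwaysA n true) (alwaysB n true) t →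
      ∃ i, (t i).2.2.2 = false := fun t ht => exists_false_round n hn t ht
  -- the view distributions
  have hqf1 : qView (fun k : Bool => traceProb (fairSched n) (alwaysA n k) (alwaysB n true))
      false (fun _ : Fin n => ((true : Bool), (true : Bool))) = 1 := by
    unfold qView
    beta_reduce
    trans (∑ t : Fin n → Bool × Bool × Bool × Bool, if t = t0 n then (1:ℝ) else 0)
    · refine Finset.sum_congr rfl (fun t _ => ?_)
      by_cases h : t = t0 n
      · subst h
        rw [traceProb_never, if_pos rfl]
        exact if_pos rfl
      · rw [traceProb_never, if_neg h]
        exact ite_self 0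
    · rw [Finset.sum_ite_eq']
      simp
  have hqf0 : ∀ v : Fin n → Bool × Bool,
      v ≠ (fun _ : Fin n => ((true : Bool), (true : Bool))) →
      qView (fun k : Bool => traceProb (fairSched n) (alwaysA n k) (alwaysB n true))
        false v = 0 := by
    intro v hv
    unfold qView
    beta_reduce
    apply Finset.sum_eq_zero
    intro t _
    by_cases hb : bobView t = v
    · rw [if_pos hb, traceProb_never, if_neg]
      intro h
      apply hv
      rw [← hb, h]
      rfl
    · rw [if_neg hb]
  have hqt0 : qView (fun k : Bool => traceProb (fairSched n) (alwaysA n k) (alwaysB n true))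
      true (fun _ : Fin n => ((true : Bool), (true : Bool))) = 0 := by
    unfold qView
    apply Finset.sum_eq_zero
    intro t _
    by_cases h : bobView t = (fun _ : Fin n => ((true : Bool), (true : Bool)))
    · rw [if_pos h]
      by_contra hne
      have hpos : 0 < traceProb (fairSched n) (alwaysA n true) (alwaysB n true) t :=
        lt_of_le_of_ne (traceProb_nonneg _ _ _ _) (Ne.symm hne)
      obtain ⟨i, hi⟩ := c2 t hpos
      have h2 := congrFun h i
      have h3 : (t i).2.2.2 = true := congrArg Prod.snd h2
      rw [hi] at h3
      exact Bool.false_ne_true h3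
    · rw [if_neg h]
  have hqsum : ∀ k : Bool,
      ∑ v : Fin n → Bool × Bool,
        qView (fun k : Bool => traceProb (fairSched n) (alwaysA n k) (alwaysB n true)) k v
        = 1 := by
    intro k
    rw [qView_sum]
    exact sum_traceProb _ _ _
  -- conjunct 3
  have c3 : leakage 𝕍 (fun _ : Bool => (1 : ℝ) / 2)
      (fun k => traceProb (fairSched n) (alwaysA n k) (alwaysB n true)) =
      𝕍.V Bool (Ber 1) - 𝕍.V Bool (Ber (1 / 2)) :=
    leakage_two_point 𝕍 hbsc
      (qView (fun k : Bool => traceProb (fairSched n) (alwaysA n k) (alwaysB n true)))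
      (fun _ : Fin n => (true, true)) hqf1 hqf0 hqt0 (hqsum true)
  -- conjunct 4
  have c4 : 0 < 𝕍.V Bool (Ber 1) - 𝕍.V Bool (Ber (1 / 2)) := by
    have := hmono (1/2) 1 (by norm_num) (by norm_num) (by norm_num) le_rfl (by
      rw [show (1:ℝ)/2 - 1/2 = 0 by norm_num, show (1:ℝ) - 1/2 = 1/2 by norm_num, abs_zero,
        abs_of_nonneg (by norm_num : (0:ℝ) ≤ 1/2)]
      norm_num)
    linarith
  -- conjunct 5
  have c5 : 0 < classicalCapacity 𝕍 (fairSched n) := by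
    have hbdd : BddAbove {r | ∃ (s : Secret) (φA : s.K → AStrat n Bool Bool)
        (sB : BStrat n Bool Bool),
        r = leakage 𝕍 s.p fun k => traceProb (fairSched n) (φA k) sB} := by
      refine ⟨sSup {v | ∃ pY' : (Fin n → Bool × Bool) → ℝ, IsProbVector pY' ∧
        v = 𝕍.IV fun bc : (Fin n → Bool × Bool) × (Fin n → Bool × Bool) =>
          pY' bc.1 * (@ite ℝ (bc.2 = bc.1) (Classical.propDecidable _) 1 0)}, ?_⟩
      rintro r ⟨s, φA, sB, rfl⟩
      have hq : ∀ k : s.K, IsProbVector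
          (qView (fun k => traceProb (fairSched n) (φA k) sB) k) := by
        intro k
        constructor
        · exact qView_nonneg _ (fun k t => traceProb_nonneg _ _ _ _) k
        · rw [qView_sum]
          exact sum_traceProb _ _ _
      exact leakage_le_M 𝕍 hcomp s.p s.prob
        (qView (fun k => traceProb (fairSched n) (φA k) sB)) hq
    have hmem : 𝕍.V Bool (Ber 1) - 𝕍.V Bool (Ber (1 / 2)) ∈
        {r | ∃ (s : Secret) (φA : s.K → AStrat n Bool Bool) (sB : BStrat n Bool Bool),
          r = leakage 𝕍 s.p fun k => traceProb (fairSched n) (φA k) sB} := by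
      have hprob : IsProbVector (fun _ : Bool => (1:ℝ)/2) :=
        ⟨fun a => by norm_num, by rw [Fintype.sum_bool]; norm_num⟩
      refine ⟨@Secret.mk Bool _ (fun _ => (1:ℝ)/2) hprob,
        fun k => alwaysA n k, alwaysB n true, ?_⟩
      exact c3.symm
    exact lt_of_lt_of_le c4 (le_csSup hbdd hmem)
  exact ⟨c1, c2, c3, c4, c5⟩

end
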